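/- If S is a symmetric positive definite n×n matrix with nonpositive off-diagonal entries (a Stieltjes matrix), then S is invertible and all entries of S^{-1} are nonnegative. -/

import Mathlib

open Matrix

theorem stieltjes_inverse_nonneg {n : ℕ} (S : Matrix (Fin n) (Fin n) ℝ)
    (hPD : S.PosDef) (hoff : ∀ i j : Fin n, i ≠ j → S i j ≤ 0) :
    IsUnit S.det ∧ ∀ i j : Fin n, 0 ≤ S⁻¹ i j := by
  have hdet : IsUnit S.det := isUnit_iff_ne_zero.mpr (ne_of_gt hPD.det_pos)
  refine ⟨hdet, ?_⟩
  intro i j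
  by_contra hneg
  push_neg at hneg
  set x : Fin n → ℝ := fun k => S⁻¹ k j with hxdef
  have hSx : S.mulVec x = Pi.single j 1 := by
    ext k
    have h1 : S * S⁻¹ = 1 := Matrix.mul_nonsing_inv S hdet
    have : (S * S⁻¹) k j = (1 : Matrix (Fin n) (Fin n) ℝ) k j := by rw [h1]
    simpa [Matrix.mulVec, dotProduct, Matrix.mul_apply, Matrix.one_apply,
      Pi.single_apply, eq_comm] using this
  set y : Fin n → ℝ := fun k => max (x k) 0 with hydef
  set z : Fin n → ℝ := fun k => max (-(x k)) 0 with hzdef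
  have hxyz : ∀ k, x k = y k - z k := by
    intro k
    simp only [hydef, hzdef]
    rcases le_total (x k) 0 with h | h
    · rw [max_eq_right h, max_eq_left (by linarith)]; ring
    · rw [max_eq_left h, max_eq_right (by linarith)]; ring
  have hz_nonneg : ∀ k, 0 ≤ z k := fun k => le_max_right _ _
  have hy_nonneg : ∀ k, 0 ≤ y k := fun k => le_max_right _ _
  have hyz : ∀ k, y k * z k = 0 := by
    intro k
    simp only [hydef, hzdef]
    rcases le_total (x k) 0 with h | h
    · rw [max_eq_right h]; ring
    · rw [max_eq_right (by linarith : -(x k) ≤ 0)]; ring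
  have hz_ne : z ≠ 0 := by
    intro h
    have : z i = 0 := by rw [h]; rfl
    simp only [hzdef] at this
    rw [max_eq_left (by linarith : (0:ℝ) ≤ -(x i))] at this
    have hxi : x i = S⁻¹ i j := rfl
    linarith
  -- z ⬝ᵥ S *ᵥ z > 0
  have hPDz : 0 < z ⬝ᵥ S.mulVec z := by
    have h := hPD.dotProduct_mulVec_pos hz_ne
    rwa [star_trivial] at h
  -- z ⬝ᵥ S *ᵥ x = z j ≥ 0
  have hzx : z ⬝ᵥ S.mulVec x = z j := by
    rw [hSx]
    simp [dotProduct, Pi.single_apply]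
  -- z ⬝ᵥ S *ᵥ y ≤ 0
  have hzy : z ⬝ᵥ S.mulVec y ≤ 0 := by
    have : z ⬝ᵥ S.mulVec y = ∑ k, ∑ l, z k * (S k l * y l) := by
      simp [dotProduct, Matrix.mulVec, Finset.mul_sum]
    rw [this]
    apply Finset.sum_nonpos
    intro k _
    apply Finset.sum_nonpos
    intro l _
    rcases eq_or_ne k l with rfl | hkl
    · have : z k * (S k k * y k) = S k k * (y k * z k) := by ring
      rw [this, hyz k, mul_zero]
    · have hS := hoff k l hkl
      have : z k * (S k l * y l) = S k l * (z k * y l) := by ring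
      rw [this]
      exact mul_nonpos_of_nonpos_of_nonneg hS (mul_nonneg (hz_nonneg k) (hy_nonneg l))
  have hx_eq : (x : Fin n → ℝ) = y - z := by funext k; simpa using hxyz k
  have hsplit : z ⬝ᵥ S.mulVec x = z ⬝ᵥ S.mulVec y - z ⬝ᵥ S.mulVec z := by
    rw [hx_eq, Matrix.mulVec_sub, dotProduct_sub]
  have hzj : 0 ≤ z j := hz_nonneg j
  rw [hzx] at hsplit
  linarith
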